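/- (Layer-0 pulse generation along a line.) Let D ≥ 1 and consider nodes 0, 1, …, D, where node 0 is the clock source pulsing at times t_0^k := (k−1)Λ for every integer k ≥ 1, and each node i ∈ {1,…,D} has a fixed link delay δ_i ∈ [d − u, d] and a fixed clock rate ρ_i ∈ [1, ϑ], generating its k-th pulse at time t_i^k := t_{i−1}^k + δ_i + (Λ − d)/ρ_i (i.e. it forwards the pulse Λ − d local time units after receiving it). Then for all i ∈ {0,…,D} and k ≥ 1: (i) (k+i−1)Λ − iκ/2 ≤ t_i^k ≤ (k+i−1)Λ; (ii) t_i^{k+1} = t_i^k + Λ; and (iii) for all i ∈ {0,…,D−1} and k ≥ 2, |t_{i+1}^{k−1} − t_i^k| ≤ κ/2, i.e. the layer-0 local skew between adjacent nodes (comparing consecutively indexed pulses) is at most κ/2. -/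

import Mathlib

/-- Lemma `layer0`: pulse generation along a line of nodes
`0, 1, …, D`, with fixed link delays `δ i ∈ [d-u, d]` and clock rates
`ρ i ∈ [1, ϑ]`. -/
theorem stmt17
    (ϑ u d Λ κ : ℝ)
    (hϑ : 1 < ϑ) (hu : 0 ≤ u) (hd : u ≤ d) (hΛ : d < Λ)
    (hκ : κ = 2 * (u + (1 - 1/ϑ) * (Λ - d)))
    (D : ℕ) (hD : 1 ≤ D)
    (δ ρ : ℕ → ℝ)
    (hδ : ∀ i : ℕ, 1 ≤ i → i ≤ D → d - u ≤ δ i ∧ δ i ≤ d)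
    (hρ : ∀ i : ℕ, 1 ≤ i → i ≤ D → 1 ≤ ρ i ∧ ρ i ≤ ϑ)
    (t : ℕ → ℕ → ℝ)
    (ht0 : ∀ k : ℕ, 1 ≤ k → t 0 k = ((k:ℝ) - 1) * Λ)
    (htrec : ∀ i k : ℕ, 1 ≤ i → i ≤ D → 1 ≤ k →
      t i k = t (i-1) k + δ i + (Λ - d) / ρ i) :
    (∀ i k : ℕ, i ≤ D → 1 ≤ k →
      ((k:ℝ) + (i:ℝ) - 1) * Λ - (i:ℝ)*κ/2 ≤ t i k ∧
      t i k ≤ ((k:ℝ) + (i:ℝ) - 1) * Λ) ∧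
    (∀ i k : ℕ, i ≤ D → 1 ≤ k → t i (k+1) = t i k + Λ) ∧
    (∀ i k : ℕ, i + 1 ≤ D → 2 ≤ k → |t (i+1) (k-1) - t i k| ≤ κ/2) := by
  have hϑ0 : 0 < ϑ := by linarith
  have step : ∀ i : ℕ, 1 ≤ i → i ≤ D →
      Λ - κ/2 ≤ δ i + (Λ - d) / ρ i ∧ δ i + (Λ - d) / ρ i ≤ Λ := by
    intro i h1 h2
    obtain ⟨hδ1, hδ2⟩ := hδ i h1 h2
    obtain ⟨hρ1, hρ2⟩ := hρ i h1 h2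
    have hρ0 : 0 < ρ i := by linarith
    have hdiv1 : (Λ - d) / ϑ ≤ (Λ - d) / ρ i :=
      div_le_div_of_nonneg_left (by linarith) hρ0 hρ2
    have hdiv2 : (Λ - d) / ρ i ≤ Λ - d := by
      calc (Λ - d) / ρ i ≤ (Λ - d) / 1 :=
            div_le_div_of_nonneg_left (by linarith) one_pos hρ1
        _ = Λ - d := div_one _
    constructor
    · have : Λ - κ/2 = d - u + (Λ - d) / ϑ := by
        rw [hκ]; field_simp; ring
      linarith
    · linarith
  have part1 : ∀ i k : ℕ, i ≤ D → 1 ≤ k →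
      ((k:ℝ) + (i:ℝ) - 1) * Λ - (i:ℝ)*κ/2 ≤ t i k ∧
      t i k ≤ ((k:ℝ) + (i:ℝ) - 1) * Λ := by
    intro i
    induction i with
    | zero => intro k _ hk; rw [ht0 k hk]; norm_num
    | succ n ih =>
      intro k hnD hk
      have hn : n ≤ D := by omega
      obtain ⟨ih1, ih2⟩ := ih k hn hk
      obtain ⟨s1, s2⟩ := step (n+1) (by omega) hnD
      have hrec := htrec (n+1) k (by omega) hnD hk
      simp only [Nat.add_sub_cancel] at hrec
      push_cast
      constructor <;> [nlinarith []; nlinarith []]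
  have part2 : ∀ i k : ℕ, i ≤ D → 1 ≤ k → t i (k+1) = t i k + Λ := by
    intro i
    induction i with
    | zero =>
      intro k _ hk
      rw [ht0 k hk, ht0 (k+1) (by omega)]
      push_cast; ring
    | succ n ih =>
      intro k hnD hk
      have hn : n ≤ D := by omega
      have h1 := htrec (n+1) k (by omega) hnD hk
      have h2 := htrec (n+1) (k+1) (by omega) hnD (by omega)
      simp only [Nat.add_sub_cancel] at h1 h2
      rw [h1, h2, ih k hn hk]; ring
  refine ⟨part1, part2, ?_⟩
  intro i k hiD hk
  have hk1 : 1 ≤ k - 1 := by omega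
  have h2 : t (i+1) k = t (i+1) (k-1) + Λ := by
    have := part2 (i+1) (k-1) hiD hk1
    rwa [Nat.sub_add_cancel (by omega)] at this
  have hrec := htrec (i+1) k (by omega) hiD (by omega)
  simp only [Nat.add_sub_cancel] at hrec
  obtain ⟨s1, s2⟩ := step (i+1) (by omega) hiD
  have hκ0 : 0 ≤ κ := by
    have : 0 < (Λ - d) * (1 - 1/ϑ) := by
      apply mul_pos (by linarith)
      have : 1/ϑ < 1 := by rw [div_lt_one hϑ0]; linarith
      linarith
    nlinarith []
  rw [abs_le]
  constructor <;> nlinarith []
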